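/- In the design setup, assume Q₊ᵀQ₊ and Q₊ᵀD₊Q₊ are invertible and that neither of the following holds: (Q-inverse) (Q₊ᵀQ₊)⁻¹(Q₊ᵀD₊⁻¹Q₊)(Q₊ᵀQ₊)⁻¹ = (Q₊ᵀD₊Q₊)⁻¹, nor (Q-square) λmax[(Q₊ᵀD₊Q₊)⁻¹(Q₊ᵀD₊²Q₊)(Q₊ᵀD₊Q₊)⁻¹] = λmax[(Q₊ᵀQ₊)⁻¹]. Then there exists ε₀ > 0 such that for every ε ∈ (0, ε₀], both Δ₀(ε) := I₀(ξ,P_ε) − I₀(ξ,I_n) > 0 and Δ₁(ε) := I₁(ξ,I_n) − I₁(ξ,P_ε) > 0, where P_ε = (P₀ + ε·I_n)/(1+ε). -/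

import Mathlib

open Matrix

/-- The largest eigenvalue of a real square matrix (for the symmetric matrices
considered here the set of eigenvalues is finite and nonempty, and `sSup`
yields its maximum). -/
noncomputable def lmax {m : ℕ} (A : Matrix (Fin m) (Fin m) ℝ) : ℝ :=
  sSup {r : ℝ | ∃ v : Fin m → ℝ, v ≠ 0 ∧ A.mulVec v = r • v}

section LmaxTools
variable {m : ℕ}

lemma dot_self_nonneg (v : Fin m → ℝ) : 0 ≤ v ⬝ᵥ v :=
  Finset.sum_nonneg fun i _ => mul_self_nonneg (v i)

lemma dot_self_pos {v : Fin m → ℝ} (hv : v ≠ 0) : 0 < v ⬝ᵥ v := by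
  rcases lt_or_eq_of_le (dot_self_nonneg v) with h | h
  · exact h
  · exact absurd (dotProduct_self_eq_zero.mp h.symm) hv

lemma dot_sum_left (f : Fin m → ℝ) (vs : Fin m → Fin m → ℝ) (w : Fin m → ℝ) :
    (∑ i, f i • vs i) ⬝ᵥ w = ∑ i, f i * (vs i ⬝ᵥ w) := by
  simp only [dotProduct, Finset.sum_apply, Pi.smul_apply, smul_eq_mul,
    Finset.sum_mul, Finset.mul_sum]
  rw [Finset.sum_comm]
  simp [mul_assoc]

lemma dot_sum_right (f : Fin m → ℝ) (vs : Fin m → Fin m → ℝ) (w : Fin m → ℝ) :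
    w ⬝ᵥ (∑ i, f i • vs i) = ∑ i, f i * (w ⬝ᵥ vs i) := by
  simp only [dotProduct, Finset.sum_apply, Pi.smul_apply, smul_eq_mul,
    Finset.sum_mul, Finset.mul_sum]
  rw [Finset.sum_comm]
  congr 1; ext i; congr 1; ext k; ring

lemma mulVec_sum' (A : Matrix (Fin m) (Fin m) ℝ) (f : Fin m → ℝ) (vs : Fin m → Fin m → ℝ) :
    A *ᵥ (∑ i, f i • vs i) = ∑ i, f i • (A *ᵥ vs i) := by
  ext j
  show A j ⬝ᵥ (∑ i, f i • vs i) = _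
  rw [dot_sum_right]
  simp [Matrix.mulVec, smul_eq_mul]

lemma lmax_spec (hm : 0 < m) (A : Matrix (Fin m) (Fin m) ℝ) (hA : Aᵀ = A) :
    (∃ v : Fin m → ℝ, v ≠ 0 ∧ A.mulVec v = lmax A • v) ∧
    (∀ v : Fin m → ℝ, v ⬝ᵥ A.mulVec v ≤ lmax A * (v ⬝ᵥ v)) := by
  haveI : NeZero m := ⟨hm.ne'⟩
  have hH : A.IsHermitian := by
    rw [Matrix.IsHermitian, Matrix.conjTranspose_eq_transpose_of_trivial, hA]
  set b := hH.eigenvectorBasis with hb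
  set μ := hH.eigenvalues with hμ
  set u : Fin m → Fin m → ℝ := fun i => (WithLp.equiv 2 (Fin m → ℝ)) (b i) with hu
  have huE : ∀ i, A.mulVec (u i) = μ i • u i := fun i => hH.mulVec_eigenvectorBasis i
  have horth : ∀ i j, u i ⬝ᵥ u j = if i = j then 1 else 0 := by
    intro i j
    have := orthonormal_iff_ite.mp b.orthonormal i j
    rw [EuclideanSpace.inner_eq_star_dotProduct] at this
    rw [dotProduct_comm]
    simpa [hu] using this
  have hne : (Finset.univ : Finset (Fin m)).Nonempty := Finset.univ_nonempty
  set M := Finset.univ.sup' hne μ with hM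
  have hexp : ∀ v : Fin m → ℝ, v = ∑ i, (u i ⬝ᵥ v) • u i := by
    intro v
    have h0 : ∑ i, b.repr (WithLp.toLp 2 v) i • b i = WithLp.toLp 2 v := b.sum_repr _
    have hrepr : ∀ i, b.repr (WithLp.toLp 2 v) i = u i ⬝ᵥ v := by
      intro i
      rw [OrthonormalBasis.repr_apply_apply, EuclideanSpace.inner_eq_star_dotProduct]
      rw [dotProduct_comm]
      rfl
    simp only [hrepr] at h0
    have h1 := congrArg (WithLp.ofLp (p := 2)) h0
    simpa [hu] using h1.symm
  have hnorm : ∀ v : Fin m → ℝ, v ⬝ᵥ v = ∑ i, (u i ⬝ᵥ v) * (u i ⬝ᵥ v) := by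
    intro v
    nth_rewrite 1 [hexp v]
    rw [dot_sum_left]
  have hquad : ∀ v : Fin m → ℝ, v ⬝ᵥ A.mulVec v = ∑ i, μ i * ((u i ⬝ᵥ v) * (u i ⬝ᵥ v)) := by
    intro v
    have hAv : A *ᵥ v = ∑ i, (u i ⬝ᵥ v) • (μ i • u i) := by
      conv_lhs => rw [hexp v, mulVec_sum']
      simp only [huE]
    rw [hAv]
    simp only [smul_smul]
    rw [dot_sum_right]
    congr 1; ext i
    rw [show v ⬝ᵥ u i = u i ⬝ᵥ v from dotProduct_comm v (u i)]
    ring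
  have hray : ∀ v : Fin m → ℝ, v ⬝ᵥ A.mulVec v ≤ M * (v ⬝ᵥ v) := by
    intro v
    rw [hquad v, hnorm v, Finset.mul_sum]
    apply Finset.sum_le_sum
    intro i _
    exact mul_le_mul_of_nonneg_right (Finset.le_sup' μ (Finset.mem_univ i))
      (mul_self_nonneg _)
  have hub : ∀ r ∈ {r : ℝ | ∃ v : Fin m → ℝ, v ≠ 0 ∧ A.mulVec v = r • v}, r ≤ M := by
    rintro r ⟨v, hv0, hv⟩
    have h1 : v ⬝ᵥ A.mulVec v = r * (v ⬝ᵥ v) := by rw [hv, dotProduct_smul]; rfl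
    have := hray v
    rw [h1] at this
    exact le_of_mul_le_mul_right this (dot_self_pos hv0)
  have hmem : M ∈ {r : ℝ | ∃ v : Fin m → ℝ, v ≠ 0 ∧ A.mulVec v = r • v} := by
    obtain ⟨i₀, -, hi₀⟩ := Finset.exists_mem_eq_sup' hne μ
    refine ⟨u i₀, ?_, by rw [huE i₀, hM, hi₀]⟩
    intro h0
    have := horth i₀ i₀
    rw [h0] at this
    simp at this
  have hlmax : lmax A = M := by
    apply le_antisymm
    · exact csSup_le ⟨M, hmem⟩ hub
    · exact le_csSup ⟨M, hub⟩ hmem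
  constructor
  · obtain ⟨i₀, -, hi₀⟩ := Finset.exists_mem_eq_sup' hne μ
    refine ⟨u i₀, ?_, by rw [huE i₀, hlmax, hM, hi₀]⟩
    intro h0
    have := horth i₀ i₀
    rw [h0] at this
    simp at this
  · intro v
    rw [hlmax]
    exact hray v

lemma lmax_mono (hm : 0 < m) {A B : Matrix (Fin m) (Fin m) ℝ} (hA : Aᵀ = A) (hB : Bᵀ = B)
    (h : ∀ v : Fin m → ℝ, v ⬝ᵥ A.mulVec v ≤ v ⬝ᵥ B.mulVec v) : lmax A ≤ lmax B := by
  obtain ⟨⟨v, hv0, hv⟩, -⟩ := lmax_spec hm A hA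
  have h1 : v ⬝ᵥ A.mulVec v = lmax A * (v ⬝ᵥ v) := by
    rw [hv, dotProduct_smul]; rfl
  have h2 := (lmax_spec hm B hB).2 v
  have := le_trans (h1 ▸ h v) h2
  exact le_of_mul_le_mul_right this (dot_self_pos hv0)

lemma quad_abs_bound (C : Matrix (Fin m) (Fin m) ℝ) (v : Fin m → ℝ) :
    v ⬝ᵥ C.mulVec v ≤ (∑ i, ∑ j, |C i j|) * (v ⬝ᵥ v) := by
  have hvij : ∀ i j, |v i| * |v j| ≤ v ⬝ᵥ v := by
    intro i j
    have h1 : v i * v i ≤ v ⬝ᵥ v :=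
      Finset.single_le_sum (f := fun k => v k * v k)
        (fun k _ => mul_self_nonneg _) (Finset.mem_univ i)
    have h2 : v j * v j ≤ v ⬝ᵥ v :=
      Finset.single_le_sum (f := fun k => v k * v k)
        (fun k _ => mul_self_nonneg _) (Finset.mem_univ j)
    nlinarith [sq_nonneg (|v i| - |v j|), abs_nonneg (v i), abs_nonneg (v j),
      sq_abs (v i), sq_abs (v j)]
  have hform : v ⬝ᵥ C.mulVec v = ∑ i, ∑ j, v i * (C i j * v j) := by
    simp [dotProduct, Matrix.mulVec, Finset.mul_sum]
  rw [hform, Finset.sum_mul]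
  apply Finset.sum_le_sum
  intro i _
  rw [Finset.sum_mul]
  apply Finset.sum_le_sum
  intro j _
  calc v i * (C i j * v j) ≤ |v i * (C i j * v j)| := le_abs_self _
    _ = |C i j| * (|v i| * |v j|) := by rw [abs_mul, abs_mul]; ring
    _ ≤ |C i j| * (v ⬝ᵥ v) :=
        mul_le_mul_of_nonneg_left (hvij i j) (abs_nonneg _)

lemma lmax_le_lmax_add (hm : 0 < m) {A B : Matrix (Fin m) (Fin m) ℝ} (hA : Aᵀ = A)
    (hB : Bᵀ = B) : lmax B ≤ lmax A + ∑ i, ∑ j, |(B - A) i j| := by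
  obtain ⟨⟨v, hv0, hv⟩, -⟩ := lmax_spec hm B hB
  have h1 : v ⬝ᵥ B.mulVec v = lmax B * (v ⬝ᵥ v) := by
    rw [hv, dotProduct_smul]; rfl
  have h2 := (lmax_spec hm A hA).2 v
  have h3 := quad_abs_bound (B - A) v
  have h4 : B.mulVec v = A.mulVec v + (B - A).mulVec v := by
    rw [Matrix.sub_mulVec]; abel
  have h5 : v ⬝ᵥ B.mulVec v = v ⬝ᵥ A.mulVec v + v ⬝ᵥ (B - A).mulVec v := by
    rw [h4, dotProduct_add]
  have hd := dot_self_pos hv0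
  rw [h1] at h5
  nlinarith [h5, h2, h3]

end LmaxTools
set_option maxHeartbeats 4000000 in
/-- In the design setup, if neither (Q-inverse)
`(Q₊ᵀQ₊)⁻¹(Q₊ᵀD₊⁻¹Q₊)(Q₊ᵀQ₊)⁻¹ = (Q₊ᵀD₊Q₊)⁻¹` nor (Q-square)
`λmax[(Q₊ᵀD₊Q₊)⁻¹(Q₊ᵀD₊²Q₊)(Q₊ᵀD₊Q₊)⁻¹] = λmax[(Q₊ᵀQ₊)⁻¹]` holds, then there
is `ε₀ > 0` such that for all `ε ∈ (0, ε₀]`, with `P_ε = (P₀ + ε·Iₙ)/(1+ε)`,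
both `Δ₀(ε) = I₀(ξ,P_ε) − I₀(ξ,Iₙ) > 0` and `Δ₁(ε) = I₁(ξ,Iₙ) − I₁(ξ,P_ε) > 0`. -/
theorem delta_positive_near_zero (N n p q : ℕ) (hp : 0 < p) (hpq : p ≤ q)
    (hqn : q ≤ n) (hqN : q ≤ N)
    (Q : Matrix (Fin N) (Fin p) ℝ) (hQ : Qᵀ * Q = 1)
    (J : Matrix (Fin n) (Fin N) ℝ)
    (hJ : ∀ i, ∃ j₀, ∀ j, J i j = if j = j₀ then (1 : ℝ) else 0)
    (e : Fin q ↪ Fin N)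
    (hsupp : ∀ j, j ∉ Set.range ⇑e → ∀ i, J i j = 0)
    (hpos : ∀ k, ∃ i, J i (e k) = 1)
    (Jp : Matrix (Fin n) (Fin q) ℝ) (hJp : ∀ i k, Jp i k = J i (e k))
    (Qp : Matrix (Fin q) (Fin p) ℝ) (hQp : ∀ k j, Qp k j = Q (e k) j)
    (Dp : Matrix (Fin q) (Fin q) ℝ) (hDp : Dp = Jpᵀ * Jp)
    (hQpQp : IsUnit (Qpᵀ * Qp).det)
    (hQpDQp : IsUnit (Qpᵀ * Dp * Qp).det)
    (α : ℝ) (hα : α = (n : ℝ) / Matrix.trace Dp⁻¹)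
    (P₀ : Matrix (Fin n) (Fin n) ℝ) (hP₀ : P₀ = α • (Jp * (Dp⁻¹ * Dp⁻¹) * Jpᵀ))
    (I0f I1f : Matrix (Fin n) (Fin n) ℝ → ℝ)
    (hI0f : ∀ P : Matrix (Fin n) (Fin n) ℝ, I0f P =
      Matrix.trace ((Qᵀ * (Jᵀ * P * J) * Q)⁻¹ * (Qᵀ * (Jᵀ * P * P * J) * Q)
        * (Qᵀ * (Jᵀ * P * J) * Q)⁻¹))
    (hI1f : ∀ P : Matrix (Fin n) (Fin n) ℝ, I1f P =
      lmax ((Qᵀ * (Jᵀ * P * J) * Q)⁻¹ * (Qᵀ * ((Jᵀ * P * J) * (Jᵀ * P * J)) * Q)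
        * (Qᵀ * (Jᵀ * P * J) * Q)⁻¹))
    (hQinv : ¬((Qpᵀ * Qp)⁻¹ * (Qpᵀ * Dp⁻¹ * Qp) * (Qpᵀ * Qp)⁻¹ = (Qpᵀ * Dp * Qp)⁻¹))
    (hQsq : ¬(lmax ((Qpᵀ * Dp * Qp)⁻¹ * (Qpᵀ * (Dp * Dp) * Qp) * (Qpᵀ * Dp * Qp)⁻¹)
      = lmax ((Qpᵀ * Qp)⁻¹))) :
    ∃ ε₀ : ℝ, 0 < ε₀ ∧ ∀ ε : ℝ, 0 < ε → ε ≤ ε₀ →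
      0 < I0f ((1 + ε)⁻¹ • (P₀ + ε • (1 : Matrix (Fin n) (Fin n) ℝ))) - I0f 1 ∧
      0 < I1f 1 - I1f ((1 + ε)⁻¹ • (P₀ + ε • (1 : Matrix (Fin n) (Fin n) ℝ))) := by
  have hq0 : 0 < q := lt_of_lt_of_le hp hpq
  have hn0 : 0 < n := lt_of_lt_of_le hq0 hqn
  haveI : NeZero q := ⟨hq0.ne'⟩
  haveI : NeZero p := ⟨hp.ne'⟩
  have hJnn : ∀ i j, 0 ≤ J i j := by
    intro i j; obtain ⟨j₀, hj⟩ := hJ i; rw [hj]; split <;> norm_num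
  set d : Fin q → ℝ := fun k => ∑ i, J i (e k) with hdd
  have hDpd : Dp = Matrix.diagonal d := by
    rw [hDp]; ext k k'
    rw [Matrix.mul_apply]
    by_cases hkk : k = k'
    · subst hkk
      rw [Matrix.diagonal_apply_eq]
      apply Finset.sum_congr rfl
      intro i _
      rw [Matrix.transpose_apply, hJp]
      obtain ⟨j₀, hj⟩ := hJ i
      rw [hj]
      by_cases h : e k = j₀ <;> simp [h]
    · rw [Matrix.diagonal_apply_ne _ hkk]
      apply Finset.sum_eq_zero
      intro i _
      rw [Matrix.transpose_apply, hJp, hJp]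
      obtain ⟨j₀, hj⟩ := hJ i
      rw [hj, hj]
      by_cases h1 : e k = j₀ <;> by_cases h2 : e k' = j₀
      · exact absurd (e.injective (h1.trans h2.symm)) hkk
      all_goals simp [h1, h2]
  have hdpos : ∀ k, 0 < d k := by
    intro k
    obtain ⟨i, hi⟩ := hpos k
    have h1 : (1:ℝ) ≤ d k := by
      have : J i (e k) ≤ ∑ i', J i' (e k) :=
        Finset.single_le_sum (fun i' _ => hJnn i' (e k)) (Finset.mem_univ i)
      rw [hi] at this
      exact this
    linarith
  have hdet_d : IsUnit Dp.det := by
    rw [hDpd, Matrix.det_diagonal]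
    exact isUnit_iff_ne_zero.mpr (Finset.prod_ne_zero_iff.mpr fun k _ => (hdpos k).ne')
  have hDpDpinv : Dp * Dp⁻¹ = 1 := Matrix.mul_nonsing_inv _ hdet_d
  have hDpinvDp : Dp⁻¹ * Dp = 1 := Matrix.nonsing_inv_mul _ hdet_d
  have hDpinvd : Dp⁻¹ = Matrix.diagonal (fun k => (d k)⁻¹) := by
    conv_lhs => rw [hDpd]
    apply Matrix.inv_eq_right_inv
    rw [Matrix.diagonal_mul_diagonal,
      show (fun k => d k * (d k)⁻¹) = fun _ => (1:ℝ) from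
        funext fun k => mul_inv_cancel₀ (hdpos k).ne', Matrix.diagonal_one]
  have htrpos : 0 < Matrix.trace Dp⁻¹ := by
    rw [hDpinvd, Matrix.trace_diagonal]
    exact Finset.sum_pos (fun k _ => inv_pos.mpr (hdpos k)) Finset.univ_nonempty
  have hα0 : 0 < α := by
    rw [hα]; exact div_pos (by exact_mod_cast hn0) htrpos
  -- the inclusion matrix E
  set E : Matrix (Fin N) (Fin q) ℝ := Matrix.of (fun j k => if j = e k then 1 else 0) with hE
  have hEQ : Eᵀ * Q = Qp := by
    ext k j
    rw [Matrix.mul_apply]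
    simp only [Matrix.transpose_apply, hE, Matrix.of_apply, ite_mul, one_mul, zero_mul]
    rw [Finset.sum_ite_eq' Finset.univ (e k) (fun j' => Q j' j)]
    simp [hQp k j]
  have hQE : Qᵀ * E = Qpᵀ := by
    have := congrArg Matrix.transpose hEQ
    rwa [Matrix.transpose_mul, Matrix.transpose_transpose] at this
  have hEE : Eᵀ * E = (1 : Matrix (Fin q) (Fin q) ℝ) := by
    ext k k'
    rw [Matrix.mul_apply]
    simp only [Matrix.transpose_apply, hE, Matrix.of_apply, ite_mul, one_mul, zero_mul]
    rw [Finset.sum_ite_eq' Finset.univ (e k) (fun j => if j = e k' then (1:ℝ) else 0)]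
    simp only [Finset.mem_univ, if_true]
    by_cases h : k = k'
    · subst h; simp [Matrix.one_apply]
    · rw [if_neg (fun hh : e k = e k' => h (e.injective hh)), Matrix.one_apply_ne h]
  have hJfact : J = Jp * Eᵀ := by
    ext i j
    rw [Matrix.mul_apply]
    simp only [Matrix.transpose_apply, hE, Matrix.of_apply, mul_ite, mul_one, mul_zero]
    by_cases hj : ∃ k, j = e k
    · obtain ⟨k₀, hk₀⟩ := hj
      subst hk₀
      have hcond : ∀ k : Fin q, (e k₀ = e k) = (k₀ = k) := by
        intro k; simp [EmbeddingLike.apply_eq_iff_eq]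
      simp only [hcond]
      rw [Finset.sum_ite_eq Finset.univ k₀ (fun k => Jp i k)]
      simp [hJp]
    · rw [hsupp j (by rintro ⟨k, hk⟩; exact hj ⟨k, hk.symm⟩) i]
      symm
      apply Finset.sum_eq_zero
      intro k _
      rw [if_neg (fun h => hj ⟨k, h⟩)]
  have hJT : Jᵀ = E * Jpᵀ := by
    rw [hJfact, Matrix.transpose_mul, Matrix.transpose_transpose]
    -- contraction lemmas (tails of width N)
  have hJpcN : ∀ Z : Matrix (Fin q) (Fin N) ℝ, Jpᵀ * (Jp * Z) = Dp * Z := by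
    intro Z; rw [← Matrix.mul_assoc, ← hDp]
  have hDc1N : ∀ Z : Matrix (Fin q) (Fin N) ℝ, Dp⁻¹ * (Dp * Z) = Z := by
    intro Z; rw [← Matrix.mul_assoc, hDpinvDp, Matrix.one_mul]
  have hDc2N : ∀ Z : Matrix (Fin q) (Fin N) ℝ, Dp * (Dp⁻¹ * Z) = Z := by
    intro Z; rw [← Matrix.mul_assoc, hDpDpinv, Matrix.one_mul]
  have hEEc : ∀ Z : Matrix (Fin q) (Fin N) ℝ, Eᵀ * (E * Z) = Z := by
    intro Z; rw [← Matrix.mul_assoc, hEE, Matrix.one_mul]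
  -- sandwich lemma
  have hsand : ∀ F : Matrix (Fin q) (Fin q) ℝ, Qᵀ * (E * F * Eᵀ) * Q = Qpᵀ * F * Qp := by
    intro F
    have h1 : Qᵀ * (E * F * Eᵀ) * Q = Qᵀ * E * F * (Eᵀ * Q) := by
      simp only [Matrix.mul_assoc]
    rw [h1, hQE, hEQ]
  have hJJ : Jᵀ * J = E * Dp * Eᵀ := by
    rw [hJT, hJfact, hDp]
    simp only [Matrix.mul_assoc]
  -- core computations
  have core1 : ∀ ε : ℝ, Jᵀ * (P₀ + ε • (1 : Matrix (Fin n) (Fin n) ℝ)) * J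
      = E * (α • (1 : Matrix (Fin q) (Fin q) ℝ) + ε • Dp) * Eᵀ := by
    intro ε
    rw [hP₀, hJT, hJfact]
    simp only [Matrix.mul_add, Matrix.add_mul, Matrix.smul_mul, Matrix.mul_smul,
      Matrix.mul_one, Matrix.one_mul, Matrix.mul_assoc, hJpcN, hDc1N, hDc2N]
    try module
  have core2 : ∀ ε : ℝ, Jᵀ * (P₀ + ε • (1 : Matrix (Fin n) (Fin n) ℝ))
      * (P₀ + ε • (1 : Matrix (Fin n) (Fin n) ℝ)) * J
      = E * ((α*α) • Dp⁻¹ + (2*(ε*α)) • (1 : Matrix (Fin q) (Fin q) ℝ) + (ε*ε) • Dp) * Eᵀ := by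
    intro ε
    rw [hP₀, hJT, hJfact]
    simp only [Matrix.mul_add, Matrix.add_mul, Matrix.smul_mul, Matrix.mul_smul,
      Matrix.mul_one, Matrix.one_mul, Matrix.mul_assoc, hJpcN, hDc1N, hDc2N]
    try module
  -- matrix families
  set X : ℝ → Matrix (Fin q) (Fin q) ℝ :=
    fun ε => α • (1 : Matrix (Fin q) (Fin q) ℝ) + ε • Dp with hX
  set Y0 : ℝ → Matrix (Fin q) (Fin q) ℝ :=
    fun ε => (α*α) • Dp⁻¹ + (2*(ε*α)) • (1 : Matrix (Fin q) (Fin q) ℝ) + (ε*ε) • Dp with hY0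
  set Af : ℝ → Matrix (Fin p) (Fin p) ℝ := fun ε => Qpᵀ * X ε * Qp with hAf
  set B0f : ℝ → Matrix (Fin p) (Fin p) ℝ := fun ε => Qpᵀ * Y0 ε * Qp with hB0f
  set B1f : ℝ → Matrix (Fin p) (Fin p) ℝ := fun ε => Qpᵀ * (X ε * X ε) * Qp with hB1f
  -- Q-level identities for P = (1+ε)⁻¹ • (P₀ + ε • 1)
  have hQU : ∀ ε : ℝ,
      Qᵀ * (Jᵀ * ((1 + ε)⁻¹ • (P₀ + ε • (1 : Matrix (Fin n) (Fin n) ℝ))) * J) * Q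
      = (1 + ε)⁻¹ • Af ε := by
    intro ε
    have h1 : Jᵀ * ((1 + ε)⁻¹ • (P₀ + ε • (1 : Matrix (Fin n) (Fin n) ℝ))) * J
        = (1 + ε)⁻¹ • (Jᵀ * (P₀ + ε • (1 : Matrix (Fin n) (Fin n) ℝ)) * J) := by
      simp only [Matrix.mul_smul, Matrix.smul_mul]
    rw [h1, core1 ε]
    simp only [Matrix.mul_smul, Matrix.smul_mul, hsand, hAf, hX]
  have hQPP : ∀ ε : ℝ,
      Qᵀ * (Jᵀ * ((1 + ε)⁻¹ • (P₀ + ε • (1 : Matrix (Fin n) (Fin n) ℝ)))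
        * ((1 + ε)⁻¹ • (P₀ + ε • (1 : Matrix (Fin n) (Fin n) ℝ))) * J) * Q
      = (1 + ε)⁻¹ • (1 + ε)⁻¹ • B0f ε := by
    intro ε
    have h1 : Jᵀ * ((1 + ε)⁻¹ • (P₀ + ε • (1 : Matrix (Fin n) (Fin n) ℝ)))
        * ((1 + ε)⁻¹ • (P₀ + ε • (1 : Matrix (Fin n) (Fin n) ℝ))) * J
        = (1 + ε)⁻¹ • (1 + ε)⁻¹ • (Jᵀ * (P₀ + ε • (1 : Matrix (Fin n) (Fin n) ℝ))
            * (P₀ + ε • (1 : Matrix (Fin n) (Fin n) ℝ)) * J) := by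
      simp only [Matrix.mul_smul, Matrix.smul_mul]
    rw [h1, core2 ε]
    simp only [Matrix.mul_smul, Matrix.smul_mul, hsand, hB0f, hY0]
  have hQUsq : ∀ ε : ℝ,
      Qᵀ * ((Jᵀ * ((1 + ε)⁻¹ • (P₀ + ε • (1 : Matrix (Fin n) (Fin n) ℝ))) * J)
        * (Jᵀ * ((1 + ε)⁻¹ • (P₀ + ε • (1 : Matrix (Fin n) (Fin n) ℝ))) * J)) * Q
      = (1 + ε)⁻¹ • (1 + ε)⁻¹ • B1f ε := by
    intro ε
    have h1 : Jᵀ * ((1 + ε)⁻¹ • (P₀ + ε • (1 : Matrix (Fin n) (Fin n) ℝ))) * J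
        = (1 + ε)⁻¹ • (E * X ε * Eᵀ) := by
      have h2 : Jᵀ * ((1 + ε)⁻¹ • (P₀ + ε • (1 : Matrix (Fin n) (Fin n) ℝ))) * J
          = (1 + ε)⁻¹ • (Jᵀ * (P₀ + ε • (1 : Matrix (Fin n) (Fin n) ℝ)) * J) := by
        simp only [Matrix.mul_smul, Matrix.smul_mul]
      rw [h2, core1 ε]
    rw [h1]
    have h3 : ((1 + ε)⁻¹ • (E * X ε * Eᵀ)) * ((1 + ε)⁻¹ • (E * X ε * Eᵀ))
        = (1 + ε)⁻¹ • (1 + ε)⁻¹ • (E * (X ε * X ε) * Eᵀ) := by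
      simp only [Matrix.mul_smul, Matrix.smul_mul, Matrix.mul_assoc, hEEc]
    rw [h3]
    simp only [Matrix.mul_smul, Matrix.smul_mul, hsand, hB1f]
  -- values at P = 1
  have hQ1 : Qᵀ * (Jᵀ * (1 : Matrix (Fin n) (Fin n) ℝ) * J) * Q = Qpᵀ * Dp * Qp := by
    rw [Matrix.mul_one, hJJ, hsand]
  have hQ11 : Qᵀ * (Jᵀ * (1 : Matrix (Fin n) (Fin n) ℝ) * (1 : Matrix (Fin n) (Fin n) ℝ) * J) * Q
      = Qpᵀ * Dp * Qp := by
    rw [Matrix.mul_one, Matrix.mul_one, hJJ, hsand]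
  have hQ1sq : Qᵀ * ((Jᵀ * (1 : Matrix (Fin n) (Fin n) ℝ) * J)
      * (Jᵀ * (1 : Matrix (Fin n) (Fin n) ℝ) * J)) * Q = Qpᵀ * (Dp * Dp) * Qp := by
    rw [Matrix.mul_one, hJJ]
    have h1 : E * Dp * Eᵀ * (E * Dp * Eᵀ) = E * (Dp * Dp) * Eᵀ := by
      simp only [Matrix.mul_assoc, hEEc]
    rw [h1, hsand]
  -- invertibility and symmetric facts
  have hGGi : (Qpᵀ * Qp) * (Qpᵀ * Qp)⁻¹ = 1 := Matrix.mul_nonsing_inv _ hQpQp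
  have hGiG : (Qpᵀ * Qp)⁻¹ * (Qpᵀ * Qp) = 1 := Matrix.nonsing_inv_mul _ hQpQp
  have hSSi : (Qpᵀ * Dp * Qp) * (Qpᵀ * Dp * Qp)⁻¹ = 1 := Matrix.mul_nonsing_inv _ hQpDQp
  have hSiS : (Qpᵀ * Dp * Qp)⁻¹ * (Qpᵀ * Dp * Qp) = 1 := Matrix.nonsing_inv_mul _ hQpDQp
  have hDt : Dpᵀ = Dp := by rw [hDpd, Matrix.diagonal_transpose]
  have hDit : (Dp⁻¹)ᵀ = Dp⁻¹ := by rw [hDpinvd, Matrix.diagonal_transpose]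
  have hGt : (Qpᵀ * Qp)ᵀ = Qpᵀ * Qp := by
    rw [Matrix.transpose_mul, Matrix.transpose_transpose]
  have hGit : ((Qpᵀ * Qp)⁻¹)ᵀ = (Qpᵀ * Qp)⁻¹ := by
    rw [Matrix.transpose_nonsing_inv, hGt]
  have hSt : (Qpᵀ * Dp * Qp)ᵀ = Qpᵀ * Dp * Qp := by
    rw [Matrix.transpose_mul, Matrix.transpose_mul, Matrix.transpose_transpose, hDt,
      Matrix.mul_assoc]
  have hSit : ((Qpᵀ * Dp * Qp)⁻¹)ᵀ = (Qpᵀ * Dp * Qp)⁻¹ := by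
    rw [Matrix.transpose_nonsing_inv, hSt]
  -- I0f and I1f at the identity
  have hI0f1 : I0f 1 = Matrix.trace (Qpᵀ * Dp * Qp)⁻¹ := by
    rw [hI0f 1, hQ1, hQ11]
    rw [show (Qpᵀ * Dp * Qp)⁻¹ * (Qpᵀ * Dp * Qp) * (Qpᵀ * Dp * Qp)⁻¹ = (Qpᵀ * Dp * Qp)⁻¹ by
      rw [hSiS, Matrix.one_mul]]
  have hI1f1 : I1f 1 = lmax ((Qpᵀ * Dp * Qp)⁻¹ * (Qpᵀ * (Dp * Dp) * Qp)
      * (Qpᵀ * Dp * Qp)⁻¹) := by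
    rw [hI1f 1, hQ1, hQ1sq]
  -- contraction lemmas with width p
  have hDc1P : ∀ Z : Matrix (Fin q) (Fin p) ℝ, Dp⁻¹ * (Dp * Z) = Z := by
    intro Z; rw [← Matrix.mul_assoc, hDpinvDp, Matrix.one_mul]
  have hDc2P : ∀ Z : Matrix (Fin q) (Fin p) ℝ, Dp * (Dp⁻¹ * Z) = Z := by
    intro Z; rw [← Matrix.mul_assoc, hDpDpinv, Matrix.one_mul]
  have hGiQQ : ∀ Z : Matrix (Fin p) (Fin p) ℝ, (Qpᵀ * Qp)⁻¹ * (Qpᵀ * (Qp * Z)) = Z := by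
    intro Z
    calc (Qpᵀ * Qp)⁻¹ * (Qpᵀ * (Qp * Z)) = (Qpᵀ * Qp)⁻¹ * (Qpᵀ * Qp) * Z := by
          simp only [Matrix.mul_assoc]
      _ = Z := by rw [hGiG, Matrix.one_mul]
  have hSiQDQ : ∀ Z : Matrix (Fin p) (Fin p) ℝ,
      (Qpᵀ * Dp * Qp)⁻¹ * (Qpᵀ * (Dp * (Qp * Z))) = Z := by
    intro Z
    calc (Qpᵀ * Dp * Qp)⁻¹ * (Qpᵀ * (Dp * (Qp * Z))) = (Qpᵀ * Dp * Qp)⁻¹ * (Qpᵀ * Dp * Qp) * Z := by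
          simp only [Matrix.mul_assoc]
      _ = Z := by rw [hSiS, Matrix.one_mul]
  have hQQGi : Qpᵀ * (Qp * (Qpᵀ * Qp)⁻¹) = 1 := by
    rw [← Matrix.mul_assoc, hGGi]
  have hQDQSi : Qpᵀ * (Dp * (Qp * (Qpᵀ * Dp * Qp)⁻¹)) = 1 := by
    calc Qpᵀ * (Dp * (Qp * (Qpᵀ * Dp * Qp)⁻¹)) = (Qpᵀ * Dp * Qp) * (Qpᵀ * Dp * Qp)⁻¹ := by
          simp only [Matrix.mul_assoc]
      _ = 1 := hSSi
  have hassocS : Qpᵀ * Dp * Qp = Qpᵀ * (Dp * Qp) := Matrix.mul_assoc _ _ _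
  have hSit' : ((Qpᵀ * (Dp * Qp))⁻¹)ᵀ = (Qpᵀ * (Dp * Qp))⁻¹ := by rw [← hassocS]; exact hSit
  have hSiQDQ' : ∀ Z : Matrix (Fin p) (Fin p) ℝ,
      (Qpᵀ * (Dp * Qp))⁻¹ * (Qpᵀ * (Dp * (Qp * Z))) = Z := by rw [← hassocS]; exact hSiQDQ
  have hQDQSi' : Qpᵀ * (Dp * (Qp * (Qpᵀ * (Dp * Qp))⁻¹)) = 1 := by
    rw [← hassocS]; exact hQDQSi
  -- positivity core 1 : the matrix Cauchy-Schwarz identity for the trace criterion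
  set R : Matrix (Fin q) (Fin p) ℝ :=
    Dp⁻¹ * Qp * (Qpᵀ * Qp)⁻¹ - Qp * (Qpᵀ * Dp * Qp)⁻¹ with hR
  have hKR : (Qpᵀ * Qp)⁻¹ * (Qpᵀ * Dp⁻¹ * Qp) * (Qpᵀ * Qp)⁻¹ - (Qpᵀ * Dp * Qp)⁻¹
      = Rᵀ * Dp * R := by
    rw [hR]
    simp only [Matrix.transpose_sub, Matrix.transpose_mul, Matrix.transpose_transpose,
      hGit, hSit, hDit, Matrix.sub_mul, Matrix.mul_sub, Matrix.mul_assoc,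
      hDc1P, hDc2P, hGiQQ, hSiQDQ, hSiQDQ', hSit', hQQGi, hQDQSi, hQDQSi',
      Matrix.mul_one, Matrix.one_mul]
    abel
  -- trace positivity (core 1)
  have htrR : ∀ W : Matrix (Fin q) (Fin p) ℝ,
      Matrix.trace (Wᵀ * Dp * W) = ∑ j, ∑ k, W k j * (d k * W k j) := by
    intro W
    rw [Matrix.mul_assoc, hDpd]
    simp only [Matrix.trace, Matrix.diag]
    refine Finset.sum_congr rfl fun j _ => ?_
    rw [Matrix.mul_apply]
    refine Finset.sum_congr rfl fun k _ => ?_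
    rw [Matrix.transpose_apply, Matrix.diagonal_mul]
  have hterm_nn : ∀ (W : Matrix (Fin q) (Fin p) ℝ) (k : Fin q) (j : Fin p),
      (0:ℝ) ≤ W k j * (d k * W k j) := by
    intro W k j
    have h1 := mul_self_nonneg (W k j)
    nlinarith [hdpos k]
  have habs : ∀ W : Matrix (Fin q) (Fin p) ℝ,
      (∑ j, ∑ k, W k j * (d k * W k j)) = 0 → W = 0 := by
    intro W h
    have hz : ∀ j ∈ Finset.univ, (∑ k, W k j * (d k * W k j)) = 0 :=
      (Finset.sum_eq_zero_iff_of_nonneg fun j _ =>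
        Finset.sum_nonneg fun k _ => hterm_nn W k j).mp h
    ext k j
    have h2 := (Finset.sum_eq_zero_iff_of_nonneg fun k _ => hterm_nn W k j).mp
      (hz j (Finset.mem_univ j)) k (Finset.mem_univ k)
    by_contra hne
    have h3 : 0 < W k j * W k j := mul_self_pos.mpr hne
    nlinarith [hdpos k]
  have htrKpos : 0 < Matrix.trace ((Qpᵀ * Qp)⁻¹ * (Qpᵀ * Dp⁻¹ * Qp) * (Qpᵀ * Qp)⁻¹)
      - Matrix.trace (Qpᵀ * Dp * Qp)⁻¹ := by
    rw [← Matrix.trace_sub, hKR, htrR R]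
    rcases lt_or_eq_of_le (Finset.sum_nonneg fun j _ =>
      Finset.sum_nonneg fun k _ => hterm_nn R k j) with h | h
    · exact h
    · exfalso
      have hR0 : R = 0 := habs R h.symm
      have hK0 : (Qpᵀ * Qp)⁻¹ * (Qpᵀ * Dp⁻¹ * Qp) * (Qpᵀ * Qp)⁻¹ - (Qpᵀ * Dp * Qp)⁻¹ = 0 := by
        rw [hKR, hR0, Matrix.transpose_zero, Matrix.zero_mul, Matrix.mul_zero]
      exact hQinv (sub_eq_zero.mp hK0)
  -- Loewner comparison (core 2)
  set T : Matrix (Fin q) (Fin p) ℝ :=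
    Dp * Qp * (Qpᵀ * Dp * Qp)⁻¹ - Qp * (Qpᵀ * Qp)⁻¹ with hT
  have hWT : (Qpᵀ * Dp * Qp)⁻¹ * (Qpᵀ * (Dp * Dp) * Qp) * (Qpᵀ * Dp * Qp)⁻¹ - (Qpᵀ * Qp)⁻¹
      = Tᵀ * T := by
    rw [hT]
    simp only [Matrix.transpose_sub, Matrix.transpose_mul, Matrix.transpose_transpose,
      hGit, hSit, hSit', hDt, Matrix.sub_mul, Matrix.mul_sub, Matrix.mul_assoc,
      hGiQQ, hSiQDQ, hSiQDQ', hQQGi, hQDQSi, hQDQSi', Matrix.mul_one, Matrix.one_mul]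
    abel
  have hpsdW : ∀ v : Fin p → ℝ, v ⬝ᵥ ((Qpᵀ * Qp)⁻¹).mulVec v
      ≤ v ⬝ᵥ ((Qpᵀ * Dp * Qp)⁻¹ * (Qpᵀ * (Dp * Dp) * Qp) * (Qpᵀ * Dp * Qp)⁻¹).mulVec v := by
    intro v
    have hdiff : (Qpᵀ * Dp * Qp)⁻¹ * (Qpᵀ * (Dp * Dp) * Qp) * (Qpᵀ * Dp * Qp)⁻¹
        = (Qpᵀ * Qp)⁻¹ + Tᵀ * T := by
      rw [← hWT]; abel
    rw [hdiff, Matrix.add_mulVec, dotProduct_add]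
    have hq : v ⬝ᵥ (Tᵀ * T).mulVec v = (T.mulVec v) ⬝ᵥ (T.mulVec v) := by
      rw [← Matrix.mulVec_mulVec, Matrix.dotProduct_mulVec, Matrix.vecMul_transpose]
    have := dot_self_nonneg (T.mulVec v)
    rw [← hq] at this
    linarith
  have hMIt : ((Qpᵀ * Dp * Qp)⁻¹ * (Qpᵀ * (Dp * Dp) * Qp) * (Qpᵀ * Dp * Qp)⁻¹)ᵀ
      = (Qpᵀ * Dp * Qp)⁻¹ * (Qpᵀ * (Dp * Dp) * Qp) * (Qpᵀ * Dp * Qp)⁻¹ := by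
    simp only [Matrix.transpose_mul, Matrix.transpose_transpose, hSit, hDt]
    simp only [Matrix.mul_assoc]
  have hgap : lmax ((Qpᵀ * Qp)⁻¹)
      < lmax ((Qpᵀ * Dp * Qp)⁻¹ * (Qpᵀ * (Dp * Dp) * Qp) * (Qpᵀ * Dp * Qp)⁻¹) := by
    refine lt_of_le_of_ne (lmax_mono hp hGit hMIt hpsdW) (fun h => hQsq h.symm)
  -- continuity of the matrix families
  have hXc : Continuous X := by
    rw [hX]; exact continuous_const.add (continuous_id.smul continuous_const)
  have hAc : Continuous Af := by
    rw [hAf]; exact (continuous_const.matrix_mul hXc).matrix_mul continuous_const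
  have hY0c : Continuous Y0 := by
    rw [hY0]
    refine Continuous.add (Continuous.add continuous_const ?_) ?_
    · exact (continuous_const.mul (continuous_id.mul continuous_const)).smul continuous_const
    · exact (continuous_id.mul continuous_id).smul continuous_const
  have hB0c : Continuous B0f := by
    rw [hB0f]; exact (continuous_const.matrix_mul hY0c).matrix_mul continuous_const
  have hB1c : Continuous B1f := by
    rw [hB1f]; exact (continuous_const.matrix_mul (hXc.matrix_mul hXc)).matrix_mul continuous_const
  -- invertibility at 0 and continuity of the inverse
  have hX0 : X 0 = α • (1 : Matrix (Fin q) (Fin q) ℝ) := by rw [hX]; simp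
  have hAf0 : Af 0 = α • (Qpᵀ * Qp) := by
    show Qpᵀ * X 0 * Qp = _
    rw [hX0]
    simp only [Matrix.mul_smul, Matrix.smul_mul, Matrix.mul_one]
  have hdetA0 : (Af 0).det ≠ 0 := by
    rw [hAf0, Matrix.det_smul]
    exact mul_ne_zero (pow_ne_zero _ hα0.ne') hQpQp.ne_zero
  have hAinv_cont : ContinuousAt (fun ε => (Af ε)⁻¹) 0 := by
    have h1 : ContinuousAt Ring.inverse ((Af 0).det) := by
      rw [show (Ring.inverse : ℝ → ℝ) = Inv.inv from Ring.inverse_eq_inv']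
      exact continuousAt_inv₀ hdetA0
    exact (continuousAt_matrix_inv (Af 0) h1).comp hAc.continuousAt
  -- matrix families with inverse
  set M0m : ℝ → Matrix (Fin p) (Fin p) ℝ := fun ε => (Af ε)⁻¹ * B0f ε * (Af ε)⁻¹ with hM0m
  set M1m : ℝ → Matrix (Fin p) (Fin p) ℝ := fun ε => (Af ε)⁻¹ * B1f ε * (Af ε)⁻¹ with hM1m
  have hM0c : ContinuousAt M0m 0 := (hAinv_cont.mul hB0c.continuousAt).mul hAinv_cont
  have hM1c : ContinuousAt M1m 0 := (hAinv_cont.mul hB1c.continuousAt).mul hAinv_cont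
  -- base values
  have hA0i : (Af 0)⁻¹ = α⁻¹ • (Qpᵀ * Qp)⁻¹ := by
    rw [hAf0]
    apply Matrix.inv_eq_right_inv
    simp only [Matrix.mul_smul, Matrix.smul_mul, smul_smul, hGGi]
    rw [inv_mul_cancel₀ hα0.ne', one_smul]
  have hY00 : Y0 0 = (α*α) • Dp⁻¹ := by rw [hY0]; simp
  have hM00 : M0m 0 = (Qpᵀ * Qp)⁻¹ * (Qpᵀ * Dp⁻¹ * Qp) * (Qpᵀ * Qp)⁻¹ := by
    show (Af 0)⁻¹ * (Qpᵀ * Y0 0 * Qp) * (Af 0)⁻¹ = _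
    rw [hA0i, hY00]
    simp only [Matrix.mul_smul, Matrix.smul_mul, smul_smul]
    rw [show α⁻¹ * (α * α * α⁻¹) = 1 from by field_simp, one_smul]
  have hM10 : M1m 0 = (Qpᵀ * Qp)⁻¹ := by
    show (Af 0)⁻¹ * (Qpᵀ * (X 0 * X 0) * Qp) * (Af 0)⁻¹ = _
    rw [hA0i, hX0]
    simp only [Matrix.mul_smul, Matrix.smul_mul, smul_smul, Matrix.mul_one, Matrix.one_mul]
    rw [show α⁻¹ * (α * α * α⁻¹) = 1 from by field_simp, one_smul]
    rw [show (Qpᵀ * Qp)⁻¹ * (Qpᵀ * Qp) * (Qpᵀ * Qp)⁻¹ = (Qpᵀ * Qp)⁻¹ from by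
      rw [hGiG, Matrix.one_mul]]
  -- symmetry of M1m
  have hXt : ∀ ε : ℝ, (X ε)ᵀ = X ε := by
    intro ε; rw [hX]
    simp only [Matrix.transpose_add, Matrix.transpose_smul, Matrix.transpose_one, hDt]
  have hAft : ∀ ε : ℝ, (Af ε)ᵀ = Af ε := by
    intro ε
    show (Qpᵀ * X ε * Qp)ᵀ = Qpᵀ * X ε * Qp
    rw [Matrix.transpose_mul, Matrix.transpose_mul, Matrix.transpose_transpose, hXt,
      ← Matrix.mul_assoc]
  have hAfit : ∀ ε : ℝ, ((Af ε)⁻¹)ᵀ = (Af ε)⁻¹ := by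
    intro ε; rw [Matrix.transpose_nonsing_inv, hAft]
  have hB1t : ∀ ε : ℝ, (B1f ε)ᵀ = B1f ε := by
    intro ε
    show (Qpᵀ * (X ε * X ε) * Qp)ᵀ = Qpᵀ * (X ε * X ε) * Qp
    rw [Matrix.transpose_mul, Matrix.transpose_mul, Matrix.transpose_transpose,
      Matrix.transpose_mul, hXt, ← Matrix.mul_assoc]
  have hM1t : ∀ ε : ℝ, (M1m ε)ᵀ = M1m ε := by
    intro ε
    show ((Af ε)⁻¹ * B1f ε * (Af ε)⁻¹)ᵀ = (Af ε)⁻¹ * B1f ε * (Af ε)⁻¹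
    simp only [Matrix.transpose_mul, hAfit, hB1t, Matrix.mul_assoc]
  -- the eventual statements
  have htrc : Continuous (Matrix.trace : Matrix (Fin p) (Fin p) ℝ → ℝ) :=
    continuous_id.matrix_trace
  have hφc : ContinuousAt (fun ε => Matrix.trace (M0m ε) - Matrix.trace (Qpᵀ * Dp * Qp)⁻¹) 0 :=
    (htrc.continuousAt.comp hM0c).sub continuousAt_const
  have hval0 : 0 < Matrix.trace (M0m 0) - Matrix.trace (Qpᵀ * Dp * Qp)⁻¹ := by
    rw [hM00]; exact htrKpos
  have ev1 : ∀ᶠ ε in nhds (0:ℝ), 0 < Matrix.trace (M0m ε) - Matrix.trace (Qpᵀ * Dp * Qp)⁻¹ :=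
    hφc (Ioi_mem_nhds hval0)
  have hdetc : ContinuousAt (fun ε => (Af ε).det) 0 := hAc.matrix_det.continuousAt
  have ev2 : ∀ᶠ ε in nhds (0:ℝ), (Af ε).det ≠ 0 :=
    hdetc (compl_singleton_mem_nhds hdetA0)
  have hFcont : Continuous (fun Y : Matrix (Fin p) (Fin p) ℝ => ∑ i, ∑ j, |(Y - M1m 0) i j|) := by
    refine continuous_finset_sum _ fun i _ => continuous_finset_sum _ fun j _ => ?_
    exact ((continuous_id.sub continuous_const).matrix_elem i j).abs
  have hncont : ContinuousAt (fun ε => ∑ i, ∑ j, |(M1m ε - M1m 0) i j|) 0 :=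
    hFcont.continuousAt.comp hM1c
  have hn0val : (∑ i, ∑ j, |(M1m 0 - M1m 0) i j|) = 0 := by simp
  have ev3 : ∀ᶠ ε in nhds (0:ℝ), (∑ i, ∑ j, |(M1m ε - M1m 0) i j|)
      < lmax ((Qpᵀ * Dp * Qp)⁻¹ * (Qpᵀ * (Dp * Dp) * Qp) * (Qpᵀ * Dp * Qp)⁻¹)
        - lmax ((Qpᵀ * Qp)⁻¹) := by
    refine hncont (Iio_mem_nhds ?_)
    show (∑ i, ∑ j, |(M1m (0:ℝ) - M1m 0) i j|) < _
    rw [hn0val]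
    linarith [hgap]
  have hall := (ev1.and (ev2.and ev3))
  rw [Metric.eventually_nhds_iff] at hall
  obtain ⟨δ, hδ0, hδ⟩ := hall
  refine ⟨δ/2, by positivity, ?_⟩
  intro ε hε0 hεle
  obtain ⟨he1, he2, he3⟩ := hδ (show dist ε (0:ℝ) < δ by
    rw [Real.dist_eq, sub_zero, abs_of_pos hε0]; linarith)
  have hc : (1+ε) ≠ 0 := by positivity
  have hdetu : IsUnit (Af ε).det := isUnit_iff_ne_zero.mpr he2
  have hAinv : ((1+ε)⁻¹ • Af ε)⁻¹ = (1+ε) • (Af ε)⁻¹ := by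
    apply Matrix.inv_eq_right_inv
    simp only [Matrix.smul_mul, Matrix.mul_smul, smul_smul, Matrix.mul_nonsing_inv _ hdetu]
    rw [show (1+ε) * (1+ε)⁻¹ = 1 from mul_inv_cancel₀ hc, one_smul]
  have hI0P : I0f ((1 + ε)⁻¹ • (P₀ + ε • (1 : Matrix (Fin n) (Fin n) ℝ)))
      = Matrix.trace (M0m ε) := by
    rw [hI0f _, hQU ε, hQPP ε, hAinv]
    congr 1
    simp only [Matrix.smul_mul, Matrix.mul_smul, smul_smul]
    rw [show (1+ε) * ((1+ε)⁻¹ * (1+ε)⁻¹ * (1+ε)) = 1 from by field_simp, one_smul]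
  have hI1P : I1f ((1 + ε)⁻¹ • (P₀ + ε • (1 : Matrix (Fin n) (Fin n) ℝ)))
      = lmax (M1m ε) := by
    rw [hI1f _, hQU ε, hQUsq ε, hAinv]
    congr 1
    simp only [Matrix.smul_mul, Matrix.mul_smul, smul_smul]
    rw [show (1+ε) * ((1+ε)⁻¹ * (1+ε)⁻¹ * (1+ε)) = 1 from by field_simp, one_smul]
  constructor
  · rw [hI0P, hI0f1]
    exact he1
  · rw [hI1P, hI1f1]
    have hle := lmax_le_lmax_add hp (A := M1m 0) (B := M1m ε) (hM1t 0) (hM1t ε)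
    have hlim : lmax (M1m 0) = lmax ((Qpᵀ * Qp)⁻¹) := by rw [hM10]
    linarith [hle, he3, hlim ▸ hle]
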